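/- arXiv:2510.11543 — 2 statements merged into one kernel-verified Lean document; each statement's English description precedes it below -/
import Mathlib

section
/- Let k be a field and A = k[x,y]/(xy). Then the group of k-algebra automorphisms of A is isomorphic to (k^× × k^×) ⋊ ℤ/2, where (α,β) acts by x ↦ αx, y ↦ βy and the generator of ℤ/2 acts by exchanging x and y. In particular, every k-algebra automorphism F of A satisfies either F(x) = αx and F(y) = βy, or F(x) = αy and F(y) = βx, for some α, β ∈ k^×. -/
noncomputable section
open MvPolynomial

/-- The algebra `k[x,y]/(xy)`. -/
abbrev Axy (k : Type) [Field k] : Type :=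
  MvPolynomial (Fin 2) k ⧸ Ideal.span {(X 0 : MvPolynomial (Fin 2) k) * X 1}

/-- The class of `x` in `k[x,y]/(xy)`. -/
def xbar (k : Type) [Field k] : Axy k := Ideal.Quotient.mk _ (X 0)

/-- The class of `y` in `k[x,y]/(xy)`. -/
def ybar (k : Type) [Field k] : Axy k := Ideal.Quotient.mk _ (X 1)

/-- The action of `ℤ/2` on `kˣ × kˣ` whose generator swaps the two factors. -/
def swapHom (k : Type) [Field k] : Multiplicative (ZMod 2) →* MulAut (kˣ × kˣ) where
  toFun g := (MulEquiv.prodComm : (kˣ × kˣ) ≃* (kˣ × kˣ)) ^ (Multiplicative.toAdd g).val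
  map_one' := by
    have h : (Multiplicative.toAdd (1 : Multiplicative (ZMod 2))).val = 0 := rfl
    try dsimp only
    rw [h, pow_zero]
  map_mul' a b := by
    have h2 : (MulEquiv.prodComm : (kˣ × kˣ) ≃* (kˣ × kˣ)) ^ 2 = 1 := by
      rw [pow_two]
      ext x <;> rfl
    have hval : (Multiplicative.toAdd (a * b)).val =
        ((Multiplicative.toAdd a).val + (Multiplicative.toAdd b).val) % 2 := by
      rw [toAdd_mul]
      exact ZMod.val_add _ _
    try dsimp only
    rw [hval, ← pow_eq_pow_mod _ h2, pow_add]

namespace Stmt2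

variable (k : Type) [Field k]

def e1 : MvPolynomial (Fin 2) k →ₐ[k] Polynomial k := aeval ![Polynomial.X, 0]
def e2 : MvPolynomial (Fin 2) k →ₐ[k] Polynomial k := aeval ![0, Polynomial.X]

lemma e1_monomial (m : Fin 2 →₀ ℕ) (c : k) :
    e1 k (monomial m c) = if m 1 = 0 then Polynomial.C c * Polynomial.X ^ (m 0) else 0 := by
  rw [e1, aeval_monomial, Finsupp.prod_fintype _ _ (fun i => pow_zero _), Fin.prod_univ_two]
  simp only [Matrix.cons_val_zero, Matrix.cons_val_one, Matrix.head_cons]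
  by_cases h : m 1 = 0
  · simp [h, Polynomial.algebraMap_eq]
  · simp [h, zero_pow h]

lemma e2_monomial (m : Fin 2 →₀ ℕ) (c : k) :
    e2 k (monomial m c) = if m 0 = 0 then Polynomial.C c * Polynomial.X ^ (m 1) else 0 := by
  rw [e2, aeval_monomial, Finsupp.prod_fintype _ _ (fun i => pow_zero _), Fin.prod_univ_two]
  simp only [Matrix.cons_val_zero, Matrix.cons_val_one, Matrix.head_cons]
  by_cases h : m 0 = 0
  · simp [h, Polynomial.algebraMap_eq]
  · simp [h, zero_pow h]

lemma single0_eq_iff (m : Fin 2 →₀ ℕ) (n : ℕ) (h1 : m 1 = 0) :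
    m = Finsupp.single (0 : Fin 2) n ↔ m 0 = n := by
  constructor
  · intro h; rw [h]; simp
  · intro h; ext i; fin_cases i <;> simp [Finsupp.single_apply, h, h1]

lemma single1_eq_iff (m : Fin 2 →₀ ℕ) (n : ℕ) (h0 : m 0 = 0) :
    m = Finsupp.single (1 : Fin 2) n ↔ m 1 = n := by
  constructor
  · intro h; rw [h]; simp
  · intro h; ext i; fin_cases i <;> simp [Finsupp.single_apply, h, h0]

lemma coeff_e1 (f : MvPolynomial (Fin 2) k) (n : ℕ) :
    (e1 k f).coeff n = coeff (Finsupp.single 0 n) f := by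
  induction f using MvPolynomial.induction_on' with
  | monomial m c =>
    rw [e1_monomial, coeff_monomial]
    by_cases h : m 1 = 0
    · rw [if_pos h, Polynomial.coeff_C_mul, Polynomial.coeff_X_pow]
      by_cases h0 : m 0 = n
      · rw [if_pos h0.symm, if_pos ((single0_eq_iff m n h).mpr h0), mul_one]
      · rw [if_neg (fun hh => h0 hh.symm), if_neg (fun hh => h0 ((single0_eq_iff m n h).mp hh)), mul_zero]
    · rw [if_neg h, Polynomial.coeff_zero, if_neg, eq_comm]
      intro hh
      exact h (by rw [hh]; simp)
  | add p q hp hq => simp [map_add, hp, hq]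

lemma coeff_e2 (f : MvPolynomial (Fin 2) k) (n : ℕ) :
    (e2 k f).coeff n = coeff (Finsupp.single 1 n) f := by
  induction f using MvPolynomial.induction_on' with
  | monomial m c =>
    rw [e2_monomial, coeff_monomial]
    by_cases h : m 0 = 0
    · rw [if_pos h, Polynomial.coeff_C_mul, Polynomial.coeff_X_pow]
      by_cases h0 : m 1 = n
      · rw [if_pos h0.symm, if_pos ((single1_eq_iff m n h).mpr h0), mul_one]
      · rw [if_neg (fun hh => h0 hh.symm), if_neg (fun hh => h0 ((single1_eq_iff m n h).mp hh)), mul_zero]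
    · rw [if_neg h, Polynomial.coeff_zero, if_neg, eq_comm]
      intro hh
      exact h (by rw [hh]; simp)
  | add p q hp hq => simp [map_add, hp, hq]

lemma mem_Ixy (f : MvPolynomial (Fin 2) k) :
    f ∈ Ideal.span {(X 0 : MvPolynomial (Fin 2) k) * X 1} ↔
      ∀ m ∈ f.support, m 0 ≠ 0 ∧ m 1 ≠ 0 := by
  have hX : (X 0 : MvPolynomial (Fin 2) k) * X 1
      = monomial (Finsupp.single 0 1 + Finsupp.single 1 1) 1 := by
    rw [X, X, monomial_mul, one_mul]
  have hset : ({(X 0 : MvPolynomial (Fin 2) k) * X 1} : Set _)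
      = (fun s => monomial s (1:k)) '' {Finsupp.single 0 1 + Finsupp.single 1 1} := by
    rw [hX]; simp
  rw [hset, mem_ideal_span_monomial_image]
  apply forall₂_congr
  intro m hm
  simp only [Set.mem_singleton_iff, exists_eq_left, Finsupp.le_def, Fin.forall_fin_two,
    Finsupp.add_apply, Finsupp.single_apply]
  norm_num
  omega


lemma e1_ann : ∀ a ∈ Ideal.span {(X 0 : MvPolynomial (Fin 2) k) * X 1}, e1 k a = 0 := by
  intro a ha
  rw [Ideal.mem_span_singleton] at ha
  obtain ⟨c, rfl⟩ := ha
  rw [map_mul, map_mul]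
  simp [e1]

lemma e2_ann : ∀ a ∈ Ideal.span {(X 0 : MvPolynomial (Fin 2) k) * X 1}, e2 k a = 0 := by
  intro a ha
  rw [Ideal.mem_span_singleton] at ha
  obtain ⟨c, rfl⟩ := ha
  rw [map_mul, map_mul]
  simp [e2]

def pr1 : Axy k →ₐ[k] Polynomial k := Ideal.Quotient.liftₐ _ (e1 k) (e1_ann k)
def pr2 : Axy k →ₐ[k] Polynomial k := Ideal.Quotient.liftₐ _ (e2 k) (e2_ann k)

lemma pr1_mk (f : MvPolynomial (Fin 2) k) :
    pr1 k (Ideal.Quotient.mk _ f) = e1 k f := by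
  rw [pr1, Ideal.Quotient.liftₐ_apply]; rfl

lemma pr2_mk (f : MvPolynomial (Fin 2) k) :
    pr2 k (Ideal.Quotient.mk _ f) = e2 k f := by
  rw [pr2, Ideal.Quotient.liftₐ_apply]; rfl

lemma pr1_x : pr1 k (xbar k) = Polynomial.X := by rw [xbar, pr1_mk]; simp [e1]
lemma pr1_y : pr1 k (ybar k) = 0 := by rw [ybar, pr1_mk]; simp [e1]
lemma pr2_x : pr2 k (xbar k) = 0 := by rw [xbar, pr2_mk]; simp [e2]
lemma pr2_y : pr2 k (ybar k) = Polynomial.X := by rw [ybar, pr2_mk]; simp [e2]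

lemma pr_inj (a : Axy k) (h1 : pr1 k a = 0) (h2 : pr2 k a = 0) : a = 0 := by
  obtain ⟨f, rfl⟩ := Ideal.Quotient.mk_surjective a
  rw [pr1_mk] at h1
  rw [pr2_mk] at h2
  rw [Ideal.Quotient.eq_zero_iff_mem, mem_Ixy]
  intro m hm
  have hc := mem_support_iff.mp hm
  constructor
  · intro h0
    apply hc
    have := coeff_e2 k f (m 1)
    rw [h2, Polynomial.coeff_zero, ← (single1_eq_iff m (m 1) h0).mpr rfl] at this
    exact this.symm
  · intro h0
    apply hc
    have := coeff_e1 k f (m 0)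
    rw [h1, Polynomial.coeff_zero, ← (single0_eq_iff m (m 0) h0).mpr rfl] at this
    exact this.symm

lemma xbar_ne_zero : xbar k ≠ 0 := by
  intro h
  have := congrArg (pr1 k) h
  rw [pr1_x, map_zero] at this
  exact Polynomial.X_ne_zero this

lemma ybar_ne_zero : ybar k ≠ 0 := by
  intro h
  have := congrArg (pr2 k) h
  rw [pr2_y, map_zero] at this
  exact Polynomial.X_ne_zero this

lemma xy_zero : xbar k * ybar k = 0 := by
  rw [xbar, ybar, ← map_mul]
  exact Ideal.Quotient.eq_zero_iff_mem.mpr (Ideal.subset_span rfl)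

lemma hom_ext {B : Type} [CommRing B] [Algebra k B] {f g : Axy k →ₐ[k] B}
    (hx : f (xbar k) = g (xbar k)) (hy : f (ybar k) = g (ybar k)) : f = g := by
  apply Ideal.Quotient.algHom_ext
  apply MvPolynomial.algHom_ext
  intro i
  fin_cases i
  · simpa [Ideal.Quotient.mkₐ_eq_mk, xbar] using hx
  · simpa [Ideal.Quotient.mkₐ_eq_mk, ybar] using hy

lemma equiv_ext {f g : Axy k ≃ₐ[k] Axy k}
    (hx : f (xbar k) = g (xbar k)) (hy : f (ybar k) = g (ybar k)) : f = g :=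
  AlgEquiv.coe_algHom_injective (hom_ext k hx hy)

lemma adjoin_xy : Algebra.adjoin k {xbar k, ybar k} = ⊤ := by
  have h1 : Algebra.adjoin k (Set.range (X : Fin 2 → MvPolynomial (Fin 2) k)) = ⊤ :=
    MvPolynomial.adjoin_range_X
  have himg : (Ideal.Quotient.mkₐ k (Ideal.span {(X 0 : MvPolynomial (Fin 2) k) * X 1})) ''
      Set.range (X : Fin 2 → MvPolynomial (Fin 2) k) = {xbar k, ybar k} := by
    rw [← Set.range_comp]
    ext a
    simp [Fin.exists_fin_two, Ideal.Quotient.mkₐ_eq_mk, xbar, ybar, eq_comm]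
  rw [← himg, ← AlgHom.map_adjoin, h1, Algebra.map_top, AlgHom.range_eq_top]
  exact Ideal.Quotient.mkₐ_surjective k _

lemma range_eq {B : Type} [CommRing B] [Algebra k B] (G : Axy k →ₐ[k] B) :
    G.range = Algebra.adjoin k {G (xbar k), G (ybar k)} := by
  rw [← Algebra.map_top, ← adjoin_xy, AlgHom.map_adjoin, Set.image_pair]

lemma eval0_eq (a : Axy k) : (pr1 k a).coeff 0 = (pr2 k a).coeff 0 := by
  have h : (Polynomial.aeval (0:k)).comp (pr1 k) = (Polynomial.aeval (0:k)).comp (pr2 k) := by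
    apply hom_ext <;>
      simp [pr1_x, pr1_y, pr2_x, pr2_y]
  have := DFunLike.congr_fun h a
  simp only [AlgHom.coe_comp, Function.comp_apply] at this
  rw [Polynomial.coeff_zero_eq_eval_zero, Polynomial.coeff_zero_eq_eval_zero,
    ← Polynomial.coe_aeval_eq_eval]
  exact this


def toA (u v : Axy k) (h : u * v = 0) : Axy k →ₐ[k] Axy k :=
  Ideal.Quotient.liftₐ _ (aeval ![u, v]) (by
    intro a ha
    rw [Ideal.mem_span_singleton] at ha
    obtain ⟨c, rfl⟩ := ha
    rw [map_mul, map_mul, aeval_X, aeval_X]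
    simp only [Matrix.cons_val_zero, Matrix.cons_val_one, Matrix.head_cons]
    rw [h, zero_mul])

lemma toA_x (u v : Axy k) (h : u * v = 0) : toA k u v h (xbar k) = u := by
  rw [xbar, toA, Ideal.Quotient.liftₐ_apply]
  show aeval ![u, v] (X 0) = u
  simp

lemma toA_y (u v : Axy k) (h : u * v = 0) : toA k u v h (ybar k) = v := by
  rw [ybar, toA, Ideal.Quotient.liftₐ_apply]
  show aeval ![u, v] (X 1) = v
  simp

lemma smul_mul_zero (a b : k) : (a • xbar k) * (b • ybar k) = 0 := by
  rw [smul_mul_smul_comm, xy_zero, smul_zero]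

def dmap (a b : k) : Axy k →ₐ[k] Axy k := toA k (a • xbar k) (b • ybar k) (smul_mul_zero k a b)

lemma dmap_x (a b : k) : dmap k a b (xbar k) = a • xbar k := toA_x k _ _ _
lemma dmap_y (a b : k) : dmap k a b (ybar k) = b • ybar k := toA_y k _ _ _

lemma aut_smul {B : Type} [CommRing B] [Algebra k B] (F : Axy k →ₐ[k] B) (c : k) (z : Axy k) :
    F (c • z) = c • F z := by
  exact map_smul F c z

def D (a b : kˣ) : Axy k ≃ₐ[k] Axy k :=
  AlgEquiv.ofAlgHom (dmap k a b) (dmap k (a⁻¹ : kˣ) (b⁻¹ : kˣ))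
    (hom_ext k
      (by rw [AlgHom.comp_apply, dmap_x, aut_smul, dmap_x, smul_smul, ← Units.val_mul,
        inv_mul_cancel, Units.val_one, one_smul, AlgHom.id_apply])
      (by rw [AlgHom.comp_apply, dmap_y, aut_smul, dmap_y, smul_smul, ← Units.val_mul,
        inv_mul_cancel, Units.val_one, one_smul, AlgHom.id_apply]))
    (hom_ext k
      (by rw [AlgHom.comp_apply, dmap_x, aut_smul, dmap_x, smul_smul, ← Units.val_mul,
        mul_inv_cancel, Units.val_one, one_smul, AlgHom.id_apply])
      (by rw [AlgHom.comp_apply, dmap_y, aut_smul, dmap_y, smul_smul, ← Units.val_mul,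
        mul_inv_cancel, Units.val_one, one_smul, AlgHom.id_apply]))

lemma D_x (a b : kˣ) : D k a b (xbar k) = (a : k) • xbar k := dmap_x k a b
lemma D_y (a b : kˣ) : D k a b (ybar k) = (b : k) • ybar k := dmap_y k a b

lemma yx_zero : ybar k * xbar k = 0 := by rw [mul_comm]; exact xy_zero k

def sHom : Axy k →ₐ[k] Axy k := toA k (ybar k) (xbar k) (yx_zero k)

lemma sHom_x : sHom k (xbar k) = ybar k := toA_x k _ _ _
lemma sHom_y : sHom k (ybar k) = xbar k := toA_y k _ _ _

def S : Axy k ≃ₐ[k] Axy k :=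
  AlgEquiv.ofAlgHom (sHom k) (sHom k)
    (hom_ext k
      (by rw [AlgHom.comp_apply, sHom_x, sHom_y, AlgHom.id_apply])
      (by rw [AlgHom.comp_apply, sHom_y, sHom_x, AlgHom.id_apply]))
    (hom_ext k
      (by rw [AlgHom.comp_apply, sHom_x, sHom_y, AlgHom.id_apply])
      (by rw [AlgHom.comp_apply, sHom_y, sHom_x, AlgHom.id_apply]))

lemma S_x : S k (xbar k) = ybar k := sHom_x k
lemma S_y : S k (ybar k) = xbar k := sHom_y k

lemma S_sq : S k * S k = 1 := by
  apply equiv_ext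
  · rw [AlgEquiv.mul_apply, AlgEquiv.one_apply, S_x, S_y]
  · rw [AlgEquiv.mul_apply, AlgEquiv.one_apply, S_y, S_x]

lemma equiv_smul (F : Axy k ≃ₐ[k] Axy k) (c : k) (z : Axy k) : F (c • z) = c • F z :=
  aut_smul k (F : Axy k →ₐ[k] Axy k) c z

def f1 : (kˣ × kˣ) →* (Axy k ≃ₐ[k] Axy k) :=
  MonoidHom.mk' (fun p => D k p.1 p.2) (fun p q => by
    apply equiv_ext
    · rw [AlgEquiv.mul_apply, D_x, D_x, equiv_smul, D_x, smul_smul]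
      exact congrArg (fun t : k => t • xbar k)
        (by rw [Prod.fst_mul, Units.val_mul, mul_comm])
    · rw [AlgEquiv.mul_apply, D_y, D_y, equiv_smul, D_y, smul_smul]
      exact congrArg (fun t : k => t • ybar k)
        (by rw [Prod.snd_mul, Units.val_mul, mul_comm]))

lemma f1_apply (p : kˣ × kˣ) : f1 k p = D k p.1 p.2 := rfl

def f2 : Multiplicative (ZMod 2) →* (Axy k ≃ₐ[k] Axy k) :=
  MonoidHom.mk' (fun g => (S k) ^ (Multiplicative.toAdd g).val) (fun a b => by
    have h2 : (S k) ^ 2 = 1 := by rw [pow_two]; exact S_sq k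
    have hval : (Multiplicative.toAdd (a * b)).val =
        ((Multiplicative.toAdd a).val + (Multiplicative.toAdd b).val) % 2 := by
      rw [toAdd_mul]
      exact ZMod.val_add _ _
    rw [hval, ← pow_eq_pow_mod _ h2, pow_add])

lemma f2_apply (g : Multiplicative (ZMod 2)) :
    f2 k g = (S k) ^ (Multiplicative.toAdd g).val := rfl

lemma val_cases (g : Multiplicative (ZMod 2)) :
    (Multiplicative.toAdd g).val = 0 ∨ (Multiplicative.toAdd g).val = 1 := by
  have := ZMod.val_lt (Multiplicative.toAdd g)
  omega

lemma compat : ∀ g, (f1 k).comp ((swapHom k g).toMonoidHom)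
    = (MulAut.conj (f2 k g)).toMonoidHom.comp (f1 k) := by
  intro g
  refine MonoidHom.ext fun p => ?_
  simp only [MonoidHom.comp_apply, MulEquiv.coe_toMonoidHom, MulAut.conj_apply]
  have hswap : swapHom k g p
      = ((MulEquiv.prodComm : (kˣ × kˣ) ≃* (kˣ × kˣ)) ^ (Multiplicative.toAdd g).val) p := rfl
  rcases val_cases g with h | h
  · rw [hswap, f2_apply, h, pow_zero, pow_zero]
    simp
  · rw [hswap, f2_apply, h, pow_one, pow_one]
    have hSinv : (S k)⁻¹ = S k := inv_eq_of_mul_eq_one_right (S_sq k)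
    rw [hSinv]
    have hpc : (MulEquiv.prodComm : (kˣ × kˣ) ≃* (kˣ × kˣ)) p = (p.2, p.1) := rfl
    rw [hpc, f1_apply, f1_apply]
    apply equiv_ext
    · rw [AlgEquiv.mul_apply, AlgEquiv.mul_apply, S_x, D_y, equiv_smul, S_y]
      rw [D_x]
    · rw [AlgEquiv.mul_apply, AlgEquiv.mul_apply, S_y, D_x, equiv_smul, S_x]
      rw [D_y]

lemma smul_xbar_inj {a b : k} (h : a • xbar k = b • xbar k) : a = b := by
  have h1 := congrArg (pr1 k) h
  rw [aut_smul, aut_smul, pr1_x, Polynomial.smul_eq_C_mul, Polynomial.smul_eq_C_mul] at h1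
  exact Polynomial.C_injective (mul_right_cancel₀ Polynomial.X_ne_zero h1)

lemma smul_ybar_inj {a b : k} (h : a • ybar k = b • ybar k) : a = b := by
  have h1 := congrArg (pr2 k) h
  rw [aut_smul, aut_smul, pr2_y, Polynomial.smul_eq_C_mul, Polynomial.smul_eq_C_mul] at h1
  exact Polynomial.C_injective (mul_right_cancel₀ Polynomial.X_ne_zero h1)

lemma xbar_ne_smul_ybar (c : k) : xbar k ≠ c • ybar k := by
  intro h
  have h1 := congrArg (pr1 k) h
  rw [pr1_x, aut_smul, pr1_y, smul_zero] at h1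
  exact Polynomial.X_ne_zero h1

lemma key (G : Axy k →ₐ[k] Polynomial k) (hsurj : Function.Surjective G)
    (hy : G (ybar k) = 0) (h0 : (G (xbar k)).coeff 0 = 0) :
    ∃ a : k, a ≠ 0 ∧ G (xbar k) = Polynomial.C a * Polynomial.X := by
  have hrange : G.range = Algebra.adjoin k {G (xbar k)} := by
    rw [range_eq k G, hy]
    apply le_antisymm
    · apply Algebra.adjoin_le
      rintro z (rfl | rfl)
      · exact Algebra.subset_adjoin rfl
      · exact Subalgebra.zero_mem _
    · exact Algebra.adjoin_mono (Set.singleton_subset_iff.mpr (Set.mem_insert _ _))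
  have htop : G.range = ⊤ := (AlgHom.range_eq_top G).mpr hsurj
  have hX : Polynomial.X ∈ Algebra.adjoin k {G (xbar k)} := by
    rw [← hrange, htop]; trivial
  rw [Algebra.adjoin_singleton_eq_range_aeval, AlgHom.mem_range] at hX
  obtain ⟨r, hr⟩ := hX
  rw [← Polynomial.comp_eq_aeval] at hr
  have hdeg : r.natDegree * (G (xbar k)).natDegree = 1 := by
    have := congrArg Polynomial.natDegree hr
    rwa [Polynomial.natDegree_comp, Polynomial.natDegree_X] at this
  have h1 : (G (xbar k)).natDegree = 1 := (Nat.eq_one_of_mul_eq_one_left hdeg)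
  have hform := Polynomial.eq_X_add_C_of_natDegree_le_one (le_of_eq h1)
  rw [h0, map_zero, add_zero] at hform
  refine ⟨(G (xbar k)).coeff 1, ?_, hform⟩
  intro ha
  rw [ha, map_zero, zero_mul] at hform
  rw [hform, Polynomial.natDegree_zero] at h1
  exact zero_ne_one h1

lemma pr1_surj : Function.Surjective (pr1 k) := by
  have h : Algebra.adjoin k {(Polynomial.X : Polynomial k)} ≤ (pr1 k).range := by
    apply Algebra.adjoin_le
    rintro z rfl
    exact ⟨xbar k, pr1_x k⟩
  have htop : (⊤ : Subalgebra k (Polynomial k)) ≤ (pr1 k).range := by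
    rw [← Polynomial.adjoin_X]; exact h
  intro p
  exact htop trivial

lemma pr2_surj : Function.Surjective (pr2 k) := by
  have h : Algebra.adjoin k {(Polynomial.X : Polynomial k)} ≤ (pr2 k).range := by
    apply Algebra.adjoin_le
    rintro z rfl
    exact ⟨ybar k, pr2_y k⟩
  have htop : (⊤ : Subalgebra k (Polynomial k)) ≤ (pr2 k).range := by
    rw [← Polynomial.adjoin_X]; exact h
  intro p
  exact htop trivial

lemma sHom_sHom : (sHom k).comp (sHom k) = AlgHom.id k (Axy k) :=
  hom_ext k (by rw [AlgHom.comp_apply, sHom_x, sHom_y, AlgHom.id_apply])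
    (by rw [AlgHom.comp_apply, sHom_y, sHom_x, AlgHom.id_apply])

lemma sHom_surj : Function.Surjective (sHom k) := fun z =>
  ⟨sHom k z, by
    have := DFunLike.congr_fun (sHom_sHom k) z
    rwa [AlgHom.comp_apply, AlgHom.id_apply] at this⟩

lemma diag (F : Axy k ≃ₐ[k] Axy k) (hp1 : pr1 k (F (xbar k)) ≠ 0) :
    ∃ α β : kˣ, F (xbar k) = (α : k) • xbar k ∧ F (ybar k) = (β : k) • ybar k := by
  have hFy : F (ybar k) ≠ 0 := fun h =>
    ybar_ne_zero k (F.injective (by rw [h, map_zero]))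
  have hmul : F (xbar k) * F (ybar k) = 0 := by rw [← map_mul, xy_zero, map_zero]
  have h11 : pr1 k (F (xbar k)) * pr1 k (F (ybar k)) = 0 := by
    rw [← map_mul, hmul, map_zero]
  have hq1 : pr1 k (F (ybar k)) = 0 := by
    rcases mul_eq_zero.mp h11 with h | h
    · exact absurd h hp1
    · exact h
  have h22 : pr2 k (F (xbar k)) * pr2 k (F (ybar k)) = 0 := by
    rw [← map_mul, hmul, map_zero]
  have hp2 : pr2 k (F (xbar k)) = 0 := by
    rcases mul_eq_zero.mp h22 with h | h
    · exact h
    · exact absurd (pr_inj k _ hq1 h) hFy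
  have hFsurj : Function.Surjective (⇑F.toAlgHom) := F.surjective
  obtain ⟨a, ha, hGa0⟩ := key k ((pr1 k).comp F.toAlgHom) ((pr1_surj k).comp hFsurj)
    (by rw [AlgHom.comp_apply]; exact hq1)
    (by
      show (pr1 k (F (xbar k))).coeff 0 = 0
      have h0 := eval0_eq k (F (xbar k))
      rw [hp2, Polynomial.coeff_zero] at h0
      exact h0)
  have hGa : pr1 k (F (xbar k)) = Polynomial.C a * Polynomial.X := by
    rw [AlgHom.comp_apply] at hGa0; exact hGa0
  obtain ⟨b, hb, hGb0⟩ := key k (((pr2 k).comp F.toAlgHom).comp (sHom k))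
    (((pr2_surj k).comp hFsurj).comp (sHom_surj k))
    (by
      rw [AlgHom.comp_apply, AlgHom.comp_apply, sHom_y]
      exact hp2)
    (by
      rw [AlgHom.comp_apply, AlgHom.comp_apply, sHom_x]
      show (pr2 k (F (ybar k))).coeff 0 = 0
      have h0 := eval0_eq k (F (ybar k))
      rw [hq1, Polynomial.coeff_zero] at h0
      exact h0.symm)
  have hGb : pr2 k (F (ybar k)) = Polynomial.C b * Polynomial.X := by
    rw [AlgHom.comp_apply, AlgHom.comp_apply, sHom_x] at hGb0; exact hGb0
  refine ⟨Units.mk0 a ha, Units.mk0 b hb, ?_, ?_⟩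
  · have hz : pr1 k (F (xbar k) - a • xbar k) = 0 := by
      rw [map_sub, aut_smul, pr1_x, hGa, Polynomial.smul_eq_C_mul, sub_self]
    have hz2 : pr2 k (F (xbar k) - a • xbar k) = 0 := by
      rw [map_sub, aut_smul, pr2_x, hp2, smul_zero, sub_zero]
    have := pr_inj k _ hz hz2
    rw [sub_eq_zero] at this
    exact this
  · have hz : pr2 k (F (ybar k) - b • ybar k) = 0 := by
      rw [map_sub, aut_smul, pr2_y, hGb, Polynomial.smul_eq_C_mul, sub_self]
    have hz1 : pr1 k (F (ybar k) - b • ybar k) = 0 := by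
      rw [map_sub, aut_smul, pr1_y, hq1, smul_zero, sub_zero]
    have := pr_inj k _ hz1 hz
    rw [sub_eq_zero] at this
    exact this

lemma classify (F : Axy k ≃ₐ[k] Axy k) :
    (∃ α β : kˣ, F (xbar k) = (α : k) • xbar k ∧ F (ybar k) = (β : k) • ybar k) ∨
    (∃ α β : kˣ, F (xbar k) = (α : k) • ybar k ∧ F (ybar k) = (β : k) • xbar k) := by
  by_cases hp1 : pr1 k (F (xbar k)) = 0
  · right
    have hFx : F (xbar k) ≠ 0 := fun h =>
      xbar_ne_zero k (F.injective (by rw [h, map_zero]))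
    have hFy : F (ybar k) ≠ 0 := fun h =>
      ybar_ne_zero k (F.injective (by rw [h, map_zero]))
    have hp2 : pr2 k (F (xbar k)) ≠ 0 := fun h => hFx (pr_inj k _ hp1 h)
    have hmul : F (xbar k) * F (ybar k) = 0 := by rw [← map_mul, xy_zero, map_zero]
    have h22 : pr2 k (F (xbar k)) * pr2 k (F (ybar k)) = 0 := by
      rw [← map_mul, hmul, map_zero]
    have hq2 : pr2 k (F (ybar k)) = 0 := by
      rcases mul_eq_zero.mp h22 with h | h
      · exact absurd h hp2
      · exact h
    have hq1 : pr1 k (F (ybar k)) ≠ 0 := fun h => hFy (pr_inj k _ h hq2)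
    obtain ⟨α, β, h1, h2⟩ := diag k ((S k).trans F)
      (by rwa [AlgEquiv.trans_apply, S_x])
    rw [AlgEquiv.trans_apply, S_x] at h1
    rw [AlgEquiv.trans_apply, S_y] at h2
    exact ⟨β, α, h2, h1⟩
  · left
    exact diag k F hp1

def Phi : SemidirectProduct (kˣ × kˣ) (Multiplicative (ZMod 2)) (swapHom k)
    →* (Axy k ≃ₐ[k] Axy k) :=
  SemidirectProduct.lift (f1 k) (f2 k) (compat k)

lemma Phi_injective : Function.Injective (Phi k) := by
  rw [injective_iff_map_eq_one]
  intro u hu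
  have hdec : Phi k u = f1 k u.left * f2 k u.right := by
    conv_lhs => rw [← SemidirectProduct.inl_left_mul_inr_right u]
    rw [map_mul,
      show (Phi k) (SemidirectProduct.inl u.left) = f1 k u.left from
        SemidirectProduct.lift_inl _ _ _ _,
      show (Phi k) (SemidirectProduct.inr u.right) = f2 k u.right from
        SemidirectProduct.lift_inr _ _ _ _]
  rw [hdec] at hu
  rcases val_cases u.right with h | h
  · have hf2 : f2 k u.right = 1 := by rw [f2_apply, h, pow_zero]
    rw [hf2, mul_one, f1_apply] at hu
    have hx : ((u.left.1 : k)) • xbar k = (1 : k) • xbar k := by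
      have h3 : D k u.left.1 u.left.2 (xbar k) = (1 : Axy k ≃ₐ[k] Axy k) (xbar k) :=
        congrArg (fun E : Axy k ≃ₐ[k] Axy k => E (xbar k)) hu
      rw [D_x, AlgEquiv.one_apply] at h3
      rw [h3, one_smul]
    have hy : ((u.left.2 : k)) • ybar k = (1 : k) • ybar k := by
      have h3 : D k u.left.1 u.left.2 (ybar k) = (1 : Axy k ≃ₐ[k] Axy k) (ybar k) :=
        congrArg (fun E : Axy k ≃ₐ[k] Axy k => E (ybar k)) hu
      rw [D_y, AlgEquiv.one_apply] at h3
      rw [h3, one_smul]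
    have h1 : u.left.1 = 1 := Units.val_eq_one.mp (smul_xbar_inj k hx)
    have h2 : u.left.2 = 1 := Units.val_eq_one.mp (smul_ybar_inj k hy)
    have hr : u.right = 1 := by
      rw [← toAdd_eq_zero]
      exact (ZMod.val_eq_zero _).mp h
    apply SemidirectProduct.ext
    · show u.left = 1
      exact Prod.ext h1 h2
    · exact hr
  · exfalso
    have hf2 : f2 k u.right = S k := by rw [f2_apply, h, pow_one]
    rw [hf2, f1_apply] at hu
    have h3 : (D k u.left.1 u.left.2 * S k) (xbar k) = (1 : Axy k ≃ₐ[k] Axy k) (xbar k) :=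
      congrArg (fun E : Axy k ≃ₐ[k] Axy k => E (xbar k)) hu
    rw [AlgEquiv.mul_apply, AlgEquiv.one_apply, S_x, D_y] at h3
    exact xbar_ne_smul_ybar k _ h3.symm

lemma Phi_surjective : Function.Surjective (Phi k) := by
  intro F
  rcases classify k F with ⟨α, β, hx, hy⟩ | ⟨α, β, hx, hy⟩
  · refine ⟨SemidirectProduct.inl (α, β), ?_⟩
    rw [show (Phi k) (SemidirectProduct.inl (α, β)) = f1 k (α, β) from
      SemidirectProduct.lift_inl _ _ _ _, f1_apply]
    apply equiv_ext
    · rw [D_x, hx]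
    · rw [D_y, hy]
  · refine ⟨SemidirectProduct.inl (β, α)
      * SemidirectProduct.inr (Multiplicative.ofAdd (1 : ZMod 2)), ?_⟩
    rw [map_mul,
      show (Phi k) (SemidirectProduct.inl (β, α)) = f1 k (β, α) from
        SemidirectProduct.lift_inl _ _ _ _,
      show (Phi k) (SemidirectProduct.inr (Multiplicative.ofAdd (1 : ZMod 2)))
          = f2 k (Multiplicative.ofAdd (1 : ZMod 2)) from
        SemidirectProduct.lift_inr _ _ _ _,
      f1_apply, f2_apply]
    have hval : (Multiplicative.toAdd (Multiplicative.ofAdd (1 : ZMod 2))).val = 1 := rfl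
    rw [hval, pow_one]
    apply equiv_ext
    · rw [AlgEquiv.mul_apply, S_x, D_y, hx]
    · rw [AlgEquiv.mul_apply, S_y, D_x, hy]

end Stmt2

/-- For `A = k[x,y]/(xy)`, the group of `k`-algebra automorphisms of `A` is
isomorphic to `(kˣ × kˣ) ⋊ ℤ/2`, where `(α,β)` acts by `x ↦ αx`, `y ↦ βy` and the
generator of `ℤ/2` exchanges `x` and `y`.  In particular, every `k`-algebra automorphism
`F` of `A` satisfies either `F(x) = αx, F(y) = βy` or `F(x) = αy, F(y) = βx` for some
`α, β ∈ kˣ`. -/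
theorem stmt_2 (k : Type) [Field k] :
    Nonempty ((Axy k ≃ₐ[k] Axy k) ≃*
      SemidirectProduct (kˣ × kˣ) (Multiplicative (ZMod 2)) (swapHom k)) ∧
    ∀ F : Axy k ≃ₐ[k] Axy k,
      (∃ α β : kˣ, F (xbar k) = (α : k) • xbar k ∧ F (ybar k) = (β : k) • ybar k) ∨
      (∃ α β : kˣ, F (xbar k) = (α : k) • ybar k ∧ F (ybar k) = (β : k) • xbar k) := by
  constructor
  · exact ⟨(MulEquiv.ofBijective (Stmt2.Phi k)
      ⟨Stmt2.Phi_injective k, Stmt2.Phi_surjective k⟩).symm⟩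
  · exact Stmt2.classify k

end
end

section
/- Let k be a field. The endomorphism of the k-algebra k[x,y]/(xy) determined by x ↦ x + x² and y ↦ y is a well-defined injective k-algebra endomorphism which is not surjective; in particular it is not an automorphism. -/
noncomputable section
open MvPolynomial

namespace Stmt5Aux

variable {k : Type} [Field k]

/-- The substitution `x ↦ x + x²`, `y ↦ y` upstairs. -/
def Φ : MvPolynomial (Fin 2) k →ₐ[k] MvPolynomial (Fin 2) k := aeval ![X 0 + X 0 ^ 2, X 1]

/-- Kill `x`, map to `k[y] ≅ k[X]`. -/
def β : MvPolynomial (Fin 2) k →ₐ[k] Polynomial k := aeval ![0, Polynomial.X]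

/-- Kill `y`, map to `k[x] ≅ k[X]`. -/
def τ : MvPolynomial (Fin 2) k →ₐ[k] Polynomial k := aeval ![Polynomial.X, 0]

lemma X0_dvd (f : MvPolynomial (Fin 2) k) (h : β f = 0) : (X 0 : MvPolynomial (Fin 2) k) ∣ f := by
  have key : ∀ g : MvPolynomial (Fin 2) k,
      (X 0 : MvPolynomial (Fin 2) k) ∣ g - aeval ![0, X 1] g := by
    intro g
    induction g using MvPolynomial.induction_on with
    | C a => simp
    | add p q hp hq =>
        have h : p + q - aeval ![0, X 1] (p + q) =
            (p - aeval ![0, X 1] p) + (q - aeval ![0, X 1] q) := by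
          rw [map_add]; ring
        rw [h]; exact dvd_add hp hq
    | mul_X p i hp =>
        fin_cases i
        · show (X 0 : MvPolynomial (Fin 2) k) ∣ p * X 0 - aeval ![0, X 1] (p * X 0)
          simp only [map_mul, aeval_X, Matrix.cons_val_zero, mul_zero, sub_zero, Fin.isValue]
          exact Dvd.intro_left p rfl
        · show (X 0 : MvPolynomial (Fin 2) k) ∣ p * X 1 - aeval ![0, X 1] (p * X 1)
          have h : p * X 1 - aeval ![0, X 1] (p * X 1) =
              (p - aeval ![0, X 1] p) * X 1 := by
            simp only [map_mul, aeval_X, Matrix.cons_val_one, Matrix.head_cons, Matrix.cons_val_zero, Fin.isValue]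
            ring
          rw [h]; exact hp.mul_right _
  have hcomp : (aeval ![0, X 1] : MvPolynomial (Fin 2) k →ₐ[k] MvPolynomial (Fin 2) k) =
      (Polynomial.aeval (X 1 : MvPolynomial (Fin 2) k)).comp β := by
    apply MvPolynomial.algHom_ext
    intro i
    fin_cases i <;> simp [β]
  have := key f
  rw [hcomp] at this
  simpa [h] using this
lemma X1_dvd (f : MvPolynomial (Fin 2) k) (h : τ f = 0) : (X 1 : MvPolynomial (Fin 2) k) ∣ f := by
  have key : ∀ g : MvPolynomial (Fin 2) k,
      (X 1 : MvPolynomial (Fin 2) k) ∣ g - aeval ![X 0, 0] g := by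
    intro g
    induction g using MvPolynomial.induction_on with
    | C a => simp
    | add p q hp hq =>
        have h : p + q - aeval ![X 0, 0] (p + q) =
            (p - aeval ![X 0, 0] p) + (q - aeval ![X 0, 0] q) := by
          rw [map_add]; ring
        rw [h]; exact dvd_add hp hq
    | mul_X p i hp =>
        fin_cases i
        · show (X 1 : MvPolynomial (Fin 2) k) ∣ p * X 0 - aeval ![X 0, 0] (p * X 0)
          have h : p * X 0 - aeval ![X 0, 0] (p * X 0) =
              (p - aeval ![X 0, 0] p) * X 0 := by
            simp only [map_mul, aeval_X, Matrix.cons_val_zero, Fin.isValue]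
            ring
          rw [h]; exact hp.mul_right _
        · show (X 1 : MvPolynomial (Fin 2) k) ∣ p * X 1 - aeval ![X 0, 0] (p * X 1)
          simp only [map_mul, aeval_X, Matrix.cons_val_one, Matrix.head_cons, Matrix.cons_val_zero, mul_zero,
            sub_zero, Fin.isValue]
          exact Dvd.intro_left p rfl
  have hcomp : (aeval ![X 0, 0] : MvPolynomial (Fin 2) k →ₐ[k] MvPolynomial (Fin 2) k) =
      (Polynomial.aeval (X 0 : MvPolynomial (Fin 2) k)).comp τ := by
    apply MvPolynomial.algHom_ext
    intro i
    fin_cases i <;> simp [τ]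
  have := key f
  rw [hcomp] at this
  simpa [h] using this

lemma β_Φ (f : MvPolynomial (Fin 2) k) : β (Φ f) = β f := by
  have : (β.comp Φ : MvPolynomial (Fin 2) k →ₐ[k] Polynomial k) = β := by
    apply MvPolynomial.algHom_ext
    intro i
    fin_cases i <;> simp [β, Φ]
  calc β (Φ f) = (β.comp Φ) f := rfl
    _ = β f := by rw [this]

lemma τ_Φ (f : MvPolynomial (Fin 2) k) :
    τ (Φ f) = (τ f).comp (Polynomial.X + Polynomial.X ^ 2) := by
  have : (τ.comp Φ : MvPolynomial (Fin 2) k →ₐ[k] Polynomial k) =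
      (Polynomial.aeval (Polynomial.X + Polynomial.X ^ 2 : Polynomial k)).comp τ := by
    apply MvPolynomial.algHom_ext
    intro i
    fin_cases i <;> simp [τ, Φ]
  calc τ (Φ f) = (τ.comp Φ) f := rfl
    _ = Polynomial.aeval (Polynomial.X + Polynomial.X ^ 2 : Polynomial k) (τ f) := by rw [this]; rfl
    _ = (τ f).comp (Polynomial.X + Polynomial.X ^ 2) := Polynomial.comp_eq_aeval.symm

lemma natDegree_q : (Polynomial.X + Polynomial.X ^ 2 : Polynomial k).natDegree = 2 := by
  compute_degree!

lemma q_ne_C (c : k) : (Polynomial.X + Polynomial.X ^ 2 : Polynomial k) ≠ Polynomial.C c := by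
  intro h
  have := congrArg Polynomial.natDegree h
  rw [natDegree_q, Polynomial.natDegree_C] at this
  exact two_ne_zero this

/-- Key lemma: if `Φ f ∈ (xy)` then `f ∈ (xy)`. -/
lemma key_mem (f : MvPolynomial (Fin 2) k)
    (hf : Φ f ∈ Ideal.span {(X 0 : MvPolynomial (Fin 2) k) * X 1}) :
    f ∈ Ideal.span {(X 0 : MvPolynomial (Fin 2) k) * X 1} := by
  rw [Ideal.mem_span_singleton] at hf ⊢
  obtain ⟨c, hc⟩ := hf
  have hβ : β f = 0 := by
    rw [← β_Φ, hc]
    simp [β]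
  have hτΦ : τ (Φ f) = 0 := by
    rw [hc]
    simp [τ]
  have hτ : (τ f).comp (Polynomial.X + Polynomial.X ^ 2) = 0 := by
    rw [← τ_Φ]; exact hτΦ
  have hτf : τ f = 0 := by
    rcases Polynomial.comp_eq_zero_iff.mp hτ with h | ⟨_, h⟩
    · exact h
    · exact absurd h (q_ne_C _)
  obtain ⟨g, rfl⟩ := X0_dvd f hβ
  have hτg : τ g = 0 := by
    have : τ (X 0 * g) = Polynomial.X * τ g := by
      simp [τ]
    rw [this] at hτf
    exact (mul_eq_zero.mp hτf).resolve_left Polynomial.X_ne_zero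
  obtain ⟨h, rfl⟩ := X1_dvd g hτg
  exact ⟨h, by ring⟩

end Stmt5Aux

open Stmt5Aux in
/-- The endomorphism of `k[x,y]/(xy)` determined by `x ↦ x + x²`, `y ↦ y`
is a well-defined `k`-algebra endomorphism (existence), and any `k`-algebra endomorphism
with these values on `x` and `y` is injective but not surjective; in particular it is not
an automorphism. -/
theorem stmt_5 (k : Type) [Field k] :
    (∃ F : Axy k →ₐ[k] Axy k, F (xbar k) = xbar k + xbar k ^ 2 ∧ F (ybar k) = ybar k) ∧
    (∀ F : Axy k →ₐ[k] Axy k, F (xbar k) = xbar k + xbar k ^ 2 → F (ybar k) = ybar k →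
      Function.Injective F ∧ ¬ Function.Surjective F) := by
  classical
  set I : Ideal (MvPolynomial (Fin 2) k) :=
    Ideal.span {(X 0 : MvPolynomial (Fin 2) k) * X 1} with hI
  constructor
  · -- existence
    have hzero : ∀ a ∈ I, ((Ideal.Quotient.mkₐ k I).comp Φ) a = 0 := by
      intro a ha
      rw [hI, Ideal.mem_span_singleton] at ha
      obtain ⟨c, rfl⟩ := ha
      simp only [AlgHom.comp_apply, Ideal.Quotient.mkₐ_eq_mk, Ideal.Quotient.eq_zero_iff_mem]
      rw [hI, Ideal.mem_span_singleton]
      refine ⟨(1 + X 0) * Φ c, ?_⟩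
      have h0 : Φ (X 0 * X 1 * c) = (X 0 + X 0 ^ 2) * X 1 * Φ c := by
        simp [Φ]
      rw [h0]; ring
    refine ⟨Ideal.Quotient.liftₐ I _ hzero, ?_, ?_⟩
    · show Ideal.Quotient.liftₐ I _ hzero (Ideal.Quotient.mk I (X 0)) = _
      have : Ideal.Quotient.liftₐ I _ hzero (Ideal.Quotient.mk I (X 0)) =
          Ideal.Quotient.mk I (Φ (X 0)) := rfl
      rw [this]
      have hΦ : Φ (X 0 : MvPolynomial (Fin 2) k) = X 0 + X 0 ^ 2 := by simp [Φ]
      rw [hΦ, RingHom.map_add, RingHom.map_pow]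
      rfl
    · show Ideal.Quotient.liftₐ I _ hzero (Ideal.Quotient.mk I (X 1)) = _
      have : Ideal.Quotient.liftₐ I _ hzero (Ideal.Quotient.mk I (X 1)) =
          Ideal.Quotient.mk I (Φ (X 1)) := rfl
      rw [this]
      have hΦ : Φ (X 1 : MvPolynomial (Fin 2) k) = X 1 := by simp [Φ]
      rw [hΦ]
      rfl
  · intro F hx hy
    have hcomm : ∀ f : MvPolynomial (Fin 2) k,
        F (Ideal.Quotient.mk I f) = Ideal.Quotient.mk I (Φ f) := by
      have : F.comp (Ideal.Quotient.mkₐ k I) = (Ideal.Quotient.mkₐ k I).comp Φ := by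
        apply MvPolynomial.algHom_ext
        intro i
        fin_cases i
        · show F (Ideal.Quotient.mk I (X 0)) = Ideal.Quotient.mk I (Φ (X 0))
          have hΦ : Φ (X 0 : MvPolynomial (Fin 2) k) = X 0 + X 0 ^ 2 := by simp [Φ]
          rw [hΦ, RingHom.map_add, RingHom.map_pow]
          exact hx
        · show F (Ideal.Quotient.mk I (X 1)) = Ideal.Quotient.mk I (Φ (X 1))
          have hΦ : Φ (X 1 : MvPolynomial (Fin 2) k) = X 1 := by simp [Φ]
          rw [hΦ]
          exact hy
      intro f
      calc F (Ideal.Quotient.mk I f) = (F.comp (Ideal.Quotient.mkₐ k I)) f := rfl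
        _ = ((Ideal.Quotient.mkₐ k I).comp Φ) f := by rw [this]
        _ = Ideal.Quotient.mk I (Φ f) := rfl
    constructor
    · -- injective
      rw [injective_iff_map_eq_zero]
      intro a ha
      obtain ⟨f, rfl⟩ := Ideal.Quotient.mk_surjective a
      rw [hcomm f, Ideal.Quotient.eq_zero_iff_mem] at ha
      rw [Ideal.Quotient.eq_zero_iff_mem]
      exact key_mem f ha
    · -- not surjective
      intro hs
      obtain ⟨a, ha⟩ := hs (xbar k)
      obtain ⟨f, rfl⟩ := Ideal.Quotient.mk_surjective a
      rw [hcomm f] at ha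
      have hmem : Φ f - X 0 ∈ I := by
        rw [← Ideal.Quotient.eq_zero_iff_mem, map_sub, sub_eq_zero]
        exact ha
      rw [hI, Ideal.mem_span_singleton] at hmem
      obtain ⟨c, hc⟩ := hmem
      have hτ : τ (Φ f) = Polynomial.X := by
        have h1 : τ (Φ f - X 0) = 0 := by
          rw [hc]; simp [τ]
        have h2 : τ (Φ f) - Polynomial.X = 0 := by
          rw [← h1, map_sub]
          simp [τ]
        exact sub_eq_zero.mp h2
      have hdeg := congrArg Polynomial.natDegree hτ
      rw [τ_Φ, Polynomial.natDegree_comp, natDegree_q, Polynomial.natDegree_X] at hdeg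
      omega

end
end
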